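/- For a strict partition λ of length n, the weighted sum over primed shifted tableaux equals the weighted sum over unprimed shifted tableaux: Σ_{P ∈ P^λ(n,n')} wgt(P) = Σ_{S ∈ S^λ(n)} wgt(S), where wgt(S) = Π_{(i,j) ∈ SF^λ} w(s_{ij}) with w(s_{ii}) = x_k if s_{ii} = k, and for i < j: w(s_{ij}) = x_k + a_{j−i} if s_{ij} = k = s_{i,j−1}; w(s_{ij}) = y_k − a_{j−i} if s_{ij} = k = s_{i+1,j}; and w(s_{ij}) = x_k + y_k if s_{ij} = k but neither s_{i,j−1} nor s_{i+1,j} equals k. -/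

import Mathlib

open Finset

noncomputable section
open Classical

variable {R : Type*} [CommRing R]

/-- Boxes `(i,j)` of the shifted Young diagram of a strict partition `λ`:
row `i` occupies columns `i, i+1, …, i+λ_i−1`, for `1 ≤ i ≤ n`. -/
def sBoxes (lam : ℕ → ℕ) (n : ℕ) : Finset (ℕ × ℕ) :=
  (Finset.Icc 1 n ×ˢ Finset.Icc 1 (n + lam 1)).filter
    fun p => p.1 ≤ p.2 ∧ p.2 < p.1 + lam p.1

/-- Position of an entry of the primed alphabet `1' < 1 < 2' < 2 < ⋯ < n' < n`;
`(k, true)` encodes `(k+1)'` and `(k, false)` encodes `k+1`. -/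
def ordval {n : ℕ} (e : Fin n × Bool) : ℕ :=
  2 * e.1.1 + (if e.2 then 1 else 2)

/-- Primed shifted tableau conditions (P1–P4): rows and columns weakly increase,
each primed letter occurs at most once per row, each unprimed letter at most once
per column. -/
def IsPst (lam : ℕ → ℕ) (n : ℕ) (P : sBoxes lam n → Fin n × Bool) : Prop :=
  (∀ b b' : sBoxes lam n, b.1.1 = b'.1.1 → b.1.2 ≤ b'.1.2 → ordval (P b) ≤ ordval (P b')) ∧
  (∀ b b' : sBoxes lam n, b.1.2 = b'.1.2 → b.1.1 ≤ b'.1.1 → ordval (P b) ≤ ordval (P b')) ∧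
  (∀ b b' : sBoxes lam n, b ≠ b' → b.1.1 = b'.1.1 → (P b).2 = true → P b ≠ P b') ∧
  (∀ b b' : sBoxes lam n, b ≠ b' → b.1.2 = b'.1.2 → (P b).2 = false → P b ≠ P b')

/-- Condition (P5): no primed entries on the main diagonal. -/
def NoDiagPrime (lam : ℕ → ℕ) (n : ℕ) (P : sBoxes lam n → Fin n × Bool) : Prop :=
  ∀ b : sBoxes lam n, b.1.1 = b.1.2 → (P b).2 = false

/-- Weight of an entry of a primed shifted tableau in box `(i,j)` (for `P_λ`, with
`a_0 = 0`): an unprimed `k` contributes `x_k + a_{j-i}`, a primed `k'` contributes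
`y_k − a_{j-i}`. -/
def pWgt {n : ℕ} (x y a : ℕ → R) (b : ℕ × ℕ) (e : Fin n × Bool) : R :=
  if e.2 then y (e.1.1 + 1) - a (b.2 - b.1) else x (e.1.1 + 1) + a (b.2 - b.1)

/-- The factorial generalised Schur `P`-function `P_λ(x;y|a)` (take `a 0 = 0`). -/
def Pfun (lam : ℕ → ℕ) (n : ℕ) (x y a : ℕ → R) : R :=
  ∑ P ∈ Finset.univ.filter (fun P => IsPst lam n P ∧ NoDiagPrime lam n P),
    ∏ b : sBoxes lam n, pWgt x y a b.1 (P b)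

/-- Weight of an entry for `Q_λ`: a diagonal `k` contributes `x_k`, a diagonal `k'`
contributes `y_k`; off the diagonal as for `P_λ`. -/
def qWgt {n : ℕ} (x y a : ℕ → R) (b : ℕ × ℕ) (e : Fin n × Bool) : R :=
  if b.1 = b.2 then (if e.2 then y (e.1.1 + 1) else x (e.1.1 + 1))
  else (if e.2 then y (e.1.1 + 1) - a (b.2 - b.1) else x (e.1.1 + 1) + a (b.2 - b.1))

/-- The factorial generalised Schur `Q`-function `Q_λ(x;y|a)`. -/
def Qfun (lam : ℕ → ℕ) (n : ℕ) (x y a : ℕ → R) : R :=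
  ∑ P ∈ Finset.univ.filter (fun P => IsPst lam n P),
    ∏ b : sBoxes lam n, qWgt x y a b.1 (P b)

/-- Unprimed shifted tableau: rows and columns weakly increase, and entries strictly
increase along each diagonal step `(i,j) → (i+1,j+1)`. -/
def IsSt (lam : ℕ → ℕ) (n : ℕ) (S : sBoxes lam n → Fin n) : Prop :=
  (∀ b b' : sBoxes lam n, b.1.1 = b'.1.1 → b.1.2 ≤ b'.1.2 → S b ≤ S b') ∧
  (∀ b b' : sBoxes lam n, b.1.2 = b'.1.2 → b.1.1 ≤ b'.1.1 → S b ≤ S b') ∧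
  (∀ b b' : sBoxes lam n, b.1.1 + 1 = b'.1.1 → b.1.2 + 1 = b'.1.2 → S b < S b')

/-- `λ = μ + δ` with `δ = (n, n−1, …, 1)`. -/
def lamOf (μ : ℕ → ℕ) (n : ℕ) : ℕ → ℕ :=
  fun i => if 1 ≤ i ∧ i ≤ n then μ i + (n + 1 - i) else 0

/-- The weight of an entry `k = (S b).1 + 1` of an unprimed shifted tableau `S` in box
`b = (i,j)`: `x_k` on the diagonal; off the diagonal, `x_k + a_{j−i}` if the box to its
left carries the same entry, `y_k − a_{j−i}` if the box below carries the same entry,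
and `x_k + y_k` otherwise. -/
def sWgt (lam : ℕ → ℕ) (n : ℕ) (x y a : ℕ → R) (S : sBoxes lam n → Fin n)
    (b : sBoxes lam n) : R :=
  if b.1.1 = b.1.2 then x ((S b).1 + 1)
  else if ∃ b' : sBoxes lam n, b'.1.1 = b.1.1 ∧ b'.1.2 + 1 = b.1.2 ∧ S b' = S b then
    x ((S b).1 + 1) + a (b.1.2 - b.1.1)
  else if ∃ b' : sBoxes lam n, b'.1.1 = b.1.1 + 1 ∧ b'.1.2 = b.1.2 ∧ S b' = S b then
    y ((S b).1 + 1) - a (b.1.2 - b.1.1)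
  else x ((S b).1 + 1) + y ((S b).1 + 1)

lemma mem_sBoxes {lam : ℕ → ℕ} {n : ℕ} {p : ℕ × ℕ} :
    p ∈ sBoxes lam n ↔ 1 ≤ p.1 ∧ p.1 ≤ n ∧ 1 ≤ p.2 ∧ p.2 ≤ n + lam 1 ∧
      p.1 ≤ p.2 ∧ p.2 < p.1 + lam p.1 := by
  simp only [sBoxes, Finset.mem_filter, Finset.mem_product, Finset.mem_Icc]
  tauto

lemma lam_add_le {lam : ℕ → ℕ} {n : ℕ}
    (hstrict : ∀ i j, 1 ≤ i → i < j → j ≤ n → lam j < lam i)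
    {p : ℕ} (hp : 1 ≤ p) : ∀ q, p ≤ q → q ≤ n → q + lam q ≤ p + lam p := by
  intro q
  induction q with
  | zero => omega
  | succ m ih =>
    intro h1 h2
    rcases Nat.lt_or_ge p (m + 1) with h | h
    · have hm := ih (by omega) (by omega)
      have := hstrict m (m + 1) (by omega) (by omega) h2
      omega
    · have hpe : p = m + 1 := by omega
      rw [hpe]

lemma ordval_le_iff {n : ℕ} (e e' : Fin n × Bool) :
    ordval e ≤ ordval e' ↔
      (e.1.1 < e'.1.1 ∨ (e.1.1 = e'.1.1 ∧ (e.2 = true ∨ e'.2 = false))) := by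
  unfold ordval
  rcases e with ⟨k, (_|_)⟩ <;> rcases e' with ⟨k', (_|_)⟩ <;> simp <;> omega

/-- The box to the left has the same entry. -/
def LeftEq (lam : ℕ → ℕ) (n : ℕ) (S : sBoxes lam n → Fin n) (b : sBoxes lam n) : Prop :=
  ∃ b' : sBoxes lam n, b'.1.1 = b.1.1 ∧ b'.1.2 + 1 = b.1.2 ∧ S b' = S b

/-- The box below has the same entry. -/
def BelowEq (lam : ℕ → ℕ) (n : ℕ) (S : sBoxes lam n → Fin n) (b : sBoxes lam n) : Prop :=
  ∃ b' : sBoxes lam n, b'.1.1 = b.1.1 + 1 ∧ b'.1.2 = b.1.2 ∧ S b' = S b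

/-- Admissible prime-markings of box `b` of the unprimed tableau `S`. -/
def allowedB (lam : ℕ → ℕ) (n : ℕ) (S : sBoxes lam n → Fin n) (b : sBoxes lam n) :
    Finset Bool :=
  if b.1.1 = b.1.2 ∨ LeftEq lam n S b then {false}
  else if BelowEq lam n S b then {true} else Finset.univ

lemma sum_allowed {lam : ℕ → ℕ} {n : ℕ} (x y a : ℕ → R) (ha0 : a 0 = 0)
    (S : sBoxes lam n → Fin n) (b : sBoxes lam n) :
    ∑ v ∈ allowedB lam n S b, pWgt x y a b.1 (S b, v) = sWgt lam n x y a S b := by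
  have hLrw : (∃ b' : sBoxes lam n, b'.1.1 = b.1.1 ∧ b'.1.2 + 1 = b.1.2 ∧ S b' = S b) ↔
      LeftEq lam n S b := Iff.rfl
  have hBrw : (∃ b' : sBoxes lam n, b'.1.1 = b.1.1 + 1 ∧ b'.1.2 = b.1.2 ∧ S b' = S b) ↔
      BelowEq lam n S b := Iff.rfl
  unfold allowedB sWgt
  simp only [hLrw, hBrw]
  by_cases hd : b.1.1 = b.1.2
  · have hb := mem_sBoxes.mp b.2
    have hj : b.1.2 - b.1.1 = 0 := by omega
    rw [if_pos (Or.inl hd), if_pos hd, Finset.sum_singleton]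
    simp [pWgt, hj, ha0]
  · rw [if_neg hd]
    by_cases hl : LeftEq lam n S b
    · rw [if_pos (Or.inr hl), if_pos hl, Finset.sum_singleton]
      simp [pWgt]
    · rw [if_neg (not_or_intro hd hl), if_neg hl]
      by_cases hb : BelowEq lam n S b
      · rw [if_pos hb, if_pos hb, Finset.sum_singleton]
        simp [pWgt]
      · rw [if_neg hb, if_neg hb]
        rw [show (Finset.univ : Finset Bool) = {true, false} by rfl]
        rw [Finset.sum_insert (by simp), Finset.sum_singleton]
        simp only [pWgt]
        norm_num
        ring

lemma left_mem {lam : ℕ → ℕ} {n : ℕ} (b' : sBoxes lam n) (h : b'.1.1 < b'.1.2) :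
    (b'.1.1, b'.1.2 - 1) ∈ sBoxes lam n := by
  have hb := mem_sBoxes.mp b'.2
  rw [mem_sBoxes]
  simp only
  omega

lemma below_mem {lam : ℕ → ℕ} {n : ℕ}
    (hstrict : ∀ i j, 1 ≤ i → i < j → j ≤ n → lam j < lam i)
    (b b' : sBoxes lam n) (hc : b.1.2 = b'.1.2) (hr : b.1.1 < b'.1.1) :
    (b.1.1 + 1, b.1.2) ∈ sBoxes lam n := by
  have hb := mem_sBoxes.mp b.2
  have hb' := mem_sBoxes.mp b'.2
  have key : b'.1.1 + lam b'.1.1 ≤ (b.1.1 + 1) + lam (b.1.1 + 1) :=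
    lam_add_le hstrict (by omega) b'.1.1 (by omega) (by omega)
  rw [mem_sBoxes]
  simp only
  omega

lemma pst_iff {lam : ℕ → ℕ} {n : ℕ}
    (hstrict : ∀ i j, 1 ≤ i → i < j → j ≤ n → lam j < lam i)
    (S : sBoxes lam n → Fin n) (ε : sBoxes lam n → Bool) :
    (IsPst lam n (fun b => (S b, ε b)) ∧ NoDiagPrime lam n (fun b => (S b, ε b))) ↔
      (IsSt lam n S ∧ ∀ b, ε b ∈ allowedB lam n S b) := by
  constructor
  · rintro ⟨⟨hP1, hP2, hP3, hP4⟩, hP5⟩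
    have st1 : ∀ b b' : sBoxes lam n, b.1.1 = b'.1.1 → b.1.2 ≤ b'.1.2 → S b ≤ S b' := by
      intro b b' h1 h2
      have h := hP1 b b' h1 h2
      rw [ordval_le_iff] at h
      rw [Fin.le_def]
      simp only at h
      rcases h with h | ⟨h, _⟩ <;> omega
    have st2 : ∀ b b' : sBoxes lam n, b.1.2 = b'.1.2 → b.1.1 ≤ b'.1.1 → S b ≤ S b' := by
      intro b b' h1 h2
      have h := hP2 b b' h1 h2
      rw [ordval_le_iff] at h
      rw [Fin.le_def]
      simp only at h
      rcases h with h | ⟨h, _⟩ <;> omega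
    have st3 : ∀ b b' : sBoxes lam n, b.1.1 + 1 = b'.1.1 → b.1.2 + 1 = b'.1.2 → S b < S b' := by
      intro b b' h1 h2
      have hb := mem_sBoxes.mp b.2
      have hb' := mem_sBoxes.mp b'.2
      have key : b'.1.1 + lam b'.1.1 ≤ b.1.1 + lam b.1.1 :=
        lam_add_le hstrict (by omega) b'.1.1 (by omega) (by omega)
      have hcmem : (b.1.1, b.1.2 + 1) ∈ sBoxes lam n := by
        rw [mem_sBoxes]; simp only; omega
      set c : sBoxes lam n := ⟨(b.1.1, b.1.2 + 1), hcmem⟩ with hcdef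
      have hc1 : c.1.1 = b.1.1 := rfl
      have hc2 : c.1.2 = b.1.2 + 1 := rfl
      by_contra hnot
      have h1' : S b ≤ S c := st1 b c rfl (by omega)
      have h2' : S c ≤ S b' := st2 c b' (by omega) (by omega)
      have hb'b : S b' ≤ S b := le_of_not_gt hnot
      have hbc : S b = S c := le_antisymm h1' (le_trans h2' hb'b)
      have hcb' : S c = S b' := le_antisymm h2' (le_trans hb'b h1')
      have hbne : b ≠ c := by
        intro hh
        have := congrArg (fun z => z.1.2) hh
        simp only [hc2] at this
        omega
      have hcne : c ≠ b' := by
        intro hh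
        have := congrArg (fun z => z.1.1) hh
        simp only [hc1] at this
        omega
      cases hec : ε c
      · -- unprimed: clash in column with b'
        have h := hP2 c b' (by omega) (by omega)
        rw [ordval_le_iff] at h
        simp only at h
        have heb' : ε b' = false := by
          rcases h with h | ⟨_, h | h⟩
          · rw [Fin.lt_def] at *; omega
          · rw [hec] at h; exact absurd h (by simp)
          · exact h
        exact hP4 c b' hcne (by omega) (by simp [hec]) (by simp [hcb', hec, heb'])
      · -- primed: clash in row with b
        have h := hP1 b c rfl (by omega)
        rw [ordval_le_iff] at h
        simp only at h
        have heb : ε b = true := by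
          rcases h with h | ⟨_, h | h⟩
          · rw [Fin.lt_def] at *; omega
          · exact h
          · rw [hec] at h; exact absurd h (by simp)
        exact hP3 b c hbne rfl (by simp [heb]) (by simp [hbc, hec, heb])
    refine ⟨⟨st1, st2, st3⟩, ?_⟩
    intro b
    unfold allowedB
    split_ifs with h1 h2
    · simp only [Finset.mem_singleton]
      rcases h1 with hd | ⟨b₀, hr, hc, hv⟩
      · exact hP5 b hd
      · by_contra hne
        have heb : ε b = true := by simpa using hne
        have h := hP1 b₀ b hr (by omega)
        rw [ordval_le_iff] at h
        simp only at h
        have heb₀ : ε b₀ = true := by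
          rcases h with h | ⟨_, h | h⟩
          · rw [Fin.ext_iff] at hv; omega
          · exact h
          · rw [heb] at h; exact absurd h (by simp)
        have hne' : b₀ ≠ b := by
          intro hh; have := congrArg (fun z => z.1.2) hh; omega
        exact hP3 b₀ b hne' hr (by simp [heb₀]) (by simp [hv, heb₀, heb])
    · simp only [Finset.mem_singleton]
      obtain ⟨b₀, hr, hc, hv⟩ := h2
      by_contra hne
      have heb : ε b = false := by simpa using hne
      have h := hP2 b b₀ (by omega) (by omega)
      rw [ordval_le_iff] at h
      simp only at h
      have heb₀ : ε b₀ = false := by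
        rcases h with h | ⟨_, h | h⟩
        · rw [Fin.ext_iff] at hv; omega
        · rw [heb] at h; exact absurd h (by simp)
        · exact h
      have hne' : b ≠ b₀ := by
        intro hh; have := congrArg (fun z => z.1.1) hh; omega
      exact hP4 b b₀ hne' (by omega) (by simp [heb]) (by simp [hv, heb₀, heb])
    · exact Finset.mem_univ _
  · rintro ⟨⟨st1, st2, st3⟩, hε⟩
    have hdiag : ∀ b : sBoxes lam n, b.1.1 = b.1.2 → ε b = false := by
      intro b hd
      have := hε b
      rw [allowedB, if_pos (Or.inl hd)] at this
      simpa using this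
    have hleft : ∀ b : sBoxes lam n, LeftEq lam n S b → ε b = false := by
      intro b hl
      have := hε b
      rw [allowedB, if_pos (Or.inr hl)] at this
      simpa using this
    have hBL : ∀ b : sBoxes lam n, BelowEq lam n S b → ε b = true := by
      rintro b ⟨b₀, hr, hc, hv⟩
      have hm := mem_sBoxes.mp b₀.2
      have hnd : ¬ b.1.1 = b.1.2 := by omega
      have hnl : ¬ LeftEq lam n S b := by
        rintro ⟨b₁, h1, h2, h3⟩
        have := st3 b₁ b₀ (by omega) (by omega)
        rw [h3, hv] at this
        exact lt_irrefl _ this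
      have := hε b
      rw [allowedB, if_neg (by tauto), if_pos ⟨b₀, hr, hc, hv⟩] at this
      simpa using this
    -- existence of equal left neighbour forces unprimed entry
    have keyL : ∀ b b' : sBoxes lam n, b.1.1 = b'.1.1 → b.1.2 < b'.1.2 → S b = S b' →
        ε b' = false := by
      intro b b' hr hcol hv
      have hb := mem_sBoxes.mp b.2
      have hlt : b'.1.1 < b'.1.2 := by omega
      set c : sBoxes lam n := ⟨(b'.1.1, b'.1.2 - 1), left_mem b' hlt⟩ with hcdef
      have hc1 : c.1.1 = b'.1.1 := rfl
      have hc2 : c.1.2 = b'.1.2 - 1 := rfl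
      have h1 : S b ≤ S c := st1 b c (by omega) (by omega)
      have h2 : S c ≤ S b' := st1 c b' (by omega) (by omega)
      have hceq : S c = S b' := le_antisymm h2 (hv ▸ h1)
      exact hleft b' ⟨c, rfl, by omega, hceq⟩
    -- existence of equal box lower in the same column forces primed entry
    have keyB : ∀ b b' : sBoxes lam n, b.1.2 = b'.1.2 → b.1.1 < b'.1.1 → S b = S b' →
        ε b = true := by
      intro b b' hcol hrow hv
      set c : sBoxes lam n := ⟨(b.1.1 + 1, b.1.2), below_mem hstrict b b' hcol hrow⟩ with hcdef
      have hc1 : c.1.1 = b.1.1 + 1 := rfl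
      have hc2 : c.1.2 = b.1.2 := rfl
      have h1 : S b ≤ S c := st2 b c (by omega) (by omega)
      have h2 : S c ≤ S b' := st2 c b' (by omega) (by omega)
      have hceq : S c = S b := le_antisymm (hv ▸ h2) h1
      exact hBL b ⟨c, rfl, rfl, hceq⟩
    refine ⟨⟨?_, ?_, ?_, ?_⟩, ?_⟩
    · -- P1
      intro b b' hr hc
      rw [ordval_le_iff]
      simp only
      have hle : S b ≤ S b' := st1 b b' hr hc
      rw [Fin.le_def] at hle
      rcases Nat.lt_or_ge (S b).1 (S b').1 with h | h
      · exact Or.inl h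
      · have hveq : S b = S b' := Fin.ext (by omega)
        rcases Nat.lt_or_ge b.1.2 b'.1.2 with hcc | hcc
        · exact Or.inr ⟨by omega, Or.inr (keyL b b' hr hcc hveq)⟩
        · have : b = b' := Subtype.ext (Prod.ext hr (by omega))
          rw [this]
          exact Or.inr ⟨rfl, by cases ε b' <;> simp⟩
    · -- P2
      intro b b' hc hr
      rw [ordval_le_iff]
      simp only
      have hle : S b ≤ S b' := st2 b b' hc hr
      rw [Fin.le_def] at hle
      rcases Nat.lt_or_ge (S b).1 (S b').1 with h | h
      · exact Or.inl h
      · have hveq : S b = S b' := Fin.ext (by omega)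
        rcases Nat.lt_or_ge b.1.1 b'.1.1 with hrr | hrr
        · exact Or.inr ⟨by omega, Or.inl (keyB b b' hc hrr hveq)⟩
        · have : b = b' := Subtype.ext (Prod.ext (by omega) hc)
          rw [this]
          exact Or.inr ⟨rfl, by cases ε b' <;> simp⟩
    · -- P3
      intro b b' hne hr ht heq
      simp only [Prod.mk.injEq] at heq
      obtain ⟨hveq, heeq⟩ := heq
      simp only at ht
      rcases lt_trichotomy b.1.2 b'.1.2 with h | h | h
      · have := keyL b b' hr h hveq
        rw [← heeq, ht] at this
        exact absurd this (by simp)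
      · exact hne (Subtype.ext (Prod.ext hr h))
      · have := keyL b' b (by omega) h hveq.symm
        rw [ht] at this
        exact absurd this (by simp)
    · -- P4
      intro b b' hne hc hf heq
      simp only [Prod.mk.injEq] at heq
      obtain ⟨hveq, heeq⟩ := heq
      simp only at hf
      rcases lt_trichotomy b.1.1 b'.1.1 with h | h | h
      · have := keyB b b' hc h hveq
        rw [hf] at this
        exact absurd this (by simp)
      · exact hne (Subtype.ext (Prod.ext h hc))
      · have := keyB b' b (by omega) h hveq.symm
        rw [← heeq, hf] at this
        exact absurd this (by simp)
    · intro b hd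
      exact hdiag b hd

set_option maxHeartbeats 1600000 in
lemma perS {lam : ℕ → ℕ} {n : ℕ}
    (hstrict : ∀ i j, 1 ≤ i → i < j → j ≤ n → lam j < lam i)
    (x y a : ℕ → R) (ha0 : a 0 = 0) (S : sBoxes lam n → Fin n) :
    (∑ ε : sBoxes lam n → Bool,
        if IsPst lam n (fun b => (S b, ε b)) ∧ NoDiagPrime lam n (fun b => (S b, ε b)) then
          ∏ b : sBoxes lam n, pWgt x y a b.1 (S b, ε b)
        else 0) =
      if IsSt lam n S then ∏ b : sBoxes lam n, sWgt lam n x y a S b else 0 := by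
  by_cases hS : IsSt lam n S
  · rw [if_pos hS]
    have : ∀ ε : sBoxes lam n → Bool,
        (if IsPst lam n (fun b => (S b, ε b)) ∧ NoDiagPrime lam n (fun b => (S b, ε b)) then
            ∏ b : sBoxes lam n, pWgt x y a b.1 (S b, ε b) else 0) =
        (if ε ∈ Fintype.piFinset (allowedB lam n S) then
            ∏ b : sBoxes lam n, pWgt x y a b.1 (S b, ε b) else 0) := by
      intro ε
      simp only [pst_iff hstrict S ε, hS, true_and, Fintype.mem_piFinset]
    rw [Finset.sum_congr rfl (fun ε _ => this ε), Finset.sum_ite_mem, Finset.univ_inter]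
    have h2 : (∑ ε ∈ Fintype.piFinset (allowedB lam n S),
          ∏ b : sBoxes lam n, pWgt x y a b.1 (S b, ε b))
        = ∏ b : sBoxes lam n, ∑ v ∈ allowedB lam n S b, pWgt x y a b.1 (S b, v) :=
      (Finset.prod_univ_sum (allowedB lam n S) (fun b v => pWgt x y a b.1 (S b, v))).symm
    rw [h2]
    exact Finset.prod_congr rfl fun b _ => sum_allowed x y a ha0 S b
  · rw [if_neg hS]
    refine Finset.sum_eq_zero fun ε _ => ?_
    rw [if_neg]
    rw [pst_iff hstrict S ε]
    tauto

/-- for a strict partition `λ` of length `n`, the weighted sum over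
primed shifted tableaux equals the weighted sum over unprimed shifted tableaux,
`Σ_{P ∈ P^λ(n,n')} wgt(P) = Σ_{S ∈ S^λ(n)} wgt(S)` (with `a_0 = 0`, so that diagonal
entries of a primed tableau contribute `x_k`). -/
theorem primed_sum_eq_shifted_sum (n : ℕ) (hn : 1 ≤ n) (lam : ℕ → ℕ)
    (hstrict : ∀ i j, 1 ≤ i → i < j → j ≤ n → lam j < lam i) (hpos : 1 ≤ lam n)
    (hlen : ∀ i, n < i → lam i = 0) (x y a : ℕ → R) (ha0 : a 0 = 0) :
    Pfun lam n x y a =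
      ∑ S ∈ Finset.univ.filter (IsSt lam n), ∏ b : sBoxes lam n, sWgt lam n x y a S b := by
  classical
  rw [Pfun, Finset.sum_filter, Finset.sum_filter]
  rw [Fintype.sum_equiv (Equiv.arrowProdEquivProdArrow { p // p ∈ sBoxes lam n } (fun _ => Fin n) (fun _ => Bool))
      _ (fun q => if IsPst lam n (fun b => (q.1 b, q.2 b)) ∧
            NoDiagPrime lam n (fun b => (q.1 b, q.2 b)) then
          ∏ b : sBoxes lam n, pWgt x y a b.1 (q.1 b, q.2 b) else 0)
      (fun P => by simp [Equiv.arrowProdEquivProdArrow])]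
  rw [Fintype.sum_prod_type]
  exact Finset.sum_congr rfl fun S _ => perS hstrict x y a ha0 S
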